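/- Let n ∈ ℕ and consider the two configurations x⁰, x¹ ∈ {0,1}^{ℤ²} defined by x^i_{(0,0)} = x^i_{(n,i)} = 1 and x^i_v = 0 elsewhere. Then every pattern with domain [0,n-1]² occurs in x⁰ if and only if it occurs in x¹. -/
import Mathlib

lemma aux_patterns (n : ℕ) (b c : ℤ) (P : Fin n × Fin n → Bool)
    (h : ∃ v : ℤ × ℤ, ∀ u : Fin n × Fin n,
        (decide ((v.1 + (u.1 : ℤ), v.2 + (u.2 : ℤ)) = ((0 : ℤ), (0 : ℤ)) ∨
                 (v.1 + (u.1 : ℤ), v.2 + (u.2 : ℤ)) = ((n : ℤ), b))) = P u) :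
    ∃ v : ℤ × ℤ, ∀ u : Fin n × Fin n,
        (decide ((v.1 + (u.1 : ℤ), v.2 + (u.2 : ℤ)) = ((0 : ℤ), (0 : ℤ)) ∨
                 (v.1 + (u.1 : ℤ), v.2 + (u.2 : ℤ)) = ((n : ℤ), c))) = P u := by
  obtain ⟨v, h⟩ := h
  rcases le_or_gt v.1 0 with hv | hv
  · refine ⟨v, fun u => ?_⟩
    rw [← h u, decide_eq_decide]
    have hu : ((u.1:ℕ):ℤ) < n := by exact_mod_cast u.1.isLt
    simp only [Prod.mk.injEq]
    omega
  · refine ⟨(v.1, v.2 - b + c), fun u => ?_⟩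
    rw [← h u, decide_eq_decide]
    have h1 : (0:ℤ) ≤ (u.1 : ℤ) := Int.natCast_nonneg _
    have h2 : (0:ℤ) ≤ (u.2 : ℤ) := Int.natCast_nonneg _
    simp only [Prod.mk.injEq]
    omega

/-- The configurations x⁰ (ones at (0,0) and (n,0)) and x¹ (ones at (0,0) and (n,1))
contain exactly the same patterns of domain [0,n-1]². -/
theorem same_square_patterns (n : ℕ) (P : Fin n × Fin n → Bool) :
    (∃ v : ℤ × ℤ, ∀ u : Fin n × Fin n,
        (decide ((v.1 + (u.1 : ℤ), v.2 + (u.2 : ℤ)) = ((0 : ℤ), (0 : ℤ)) ∨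
                 (v.1 + (u.1 : ℤ), v.2 + (u.2 : ℤ)) = ((n : ℤ), (0 : ℤ)))) = P u) ↔
    (∃ v : ℤ × ℤ, ∀ u : Fin n × Fin n,
        (decide ((v.1 + (u.1 : ℤ), v.2 + (u.2 : ℤ)) = ((0 : ℤ), (0 : ℤ)) ∨
                 (v.1 + (u.1 : ℤ), v.2 + (u.2 : ℤ)) = ((n : ℤ), (1 : ℤ)))) = P u) := by
  exact ⟨aux_patterns n 0 1 P, aux_patterns n 1 0 P⟩
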